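/- For all integers r ≥ 3 and n ≥ r, the number S_r(n) of r-monotone colorings of the r-element subsets of {1,…,n} satisfies S_r(n) ≥ 2^{n^{r-1}/r^{4r}} (the exponent being a real number). -/
import Mathlib


/-- The `r`-element subsets of `Fin N`, representing the linearly ordered set `{1,…,N}`. -/
abbrev REdge (N r : ℕ) := {e : Finset (Fin N) // e.card = r}

/-- The `r`-subset obtained from an injective `(r+1)`-tuple by deleting its `j`-th entry. -/
def delEdge {N r : ℕ} (v : Fin (r + 1) → Fin N) (hv : Function.Injective v)
    (j : Fin (r + 1)) : REdge N r :=
  ⟨(Finset.image v Finset.univ).erase (v j), by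
    have h1 : v j ∈ Finset.image v Finset.univ :=
      Finset.mem_image_of_mem v (Finset.mem_univ j)
    have h2 := Finset.card_erase_of_mem h1
    have h3 : (Finset.image v Finset.univ).card = r + 1 := by
      rw [Finset.card_image_of_injective _ hv, Finset.card_univ, Fintype.card_fin]
    omega⟩

/-- A 2-coloring (by `-1` and `+1`) of the `r`-subsets of `{1,…,N}` is `r`-monotone if for
every `(r+1)`-subset `S = {v₁ < … < v_{r+1}}` the sequence
`(c(S∖{v_{r+1}}), …, c(S∖{v₁}))` is nondecreasing or nonincreasing. -/
def IsMonotoneColoring (r N : ℕ) (c : REdge N r → ℤ) : Prop :=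
  (∀ e, c e = -1 ∨ c e = 1) ∧
  ∀ v : Fin (r + 1) → Fin N, ∀ hv : StrictMono v,
    Monotone (fun j : Fin (r + 1) => c (delEdge v hv.injective j.rev)) ∨
    Antitone (fun j : Fin (r + 1) => c (delEdge v hv.injective j.rev))

/-- The `r`-subset `{v_i, …, v_{i+r-1}}` of a `k`-tuple. -/
def windowEdge {N k : ℕ} (r : ℕ) (v : Fin k → Fin N) (hv : Function.Injective v)
    (i : ℕ) (hi : i + r ≤ k) : REdge N r :=
  ⟨Finset.image (fun j : Fin r => v ⟨i + j.1, by have := j.isLt; omega⟩) Finset.univ, by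
    have hg : Function.Injective
        (fun j : Fin r => v ⟨i + j.1, by have := j.isLt; omega⟩) := by
      intro a b hab
      have h1 := hv hab
      have h2 : i + a.1 = i + b.1 := congrArg Fin.val h1
      exact Fin.ext (by omega)
    rw [Finset.card_image_of_injective _ hg, Finset.card_univ, Fintype.card_fin]⟩

/-- The coloring `c` contains a monochromatic copy of the monotone `r`-uniform path on
`k` vertices. -/
def HasMonoPath (r N k : ℕ) (c : REdge N r → ℤ) : Prop :=
  ∃ v : Fin k → Fin N, ∃ hv : StrictMono v, ∃ ξ : ℤ,
    ∀ i : ℕ, ∀ hi : i + r ≤ k, c (windowEdge r v hv.injective i hi) = ξ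

/-! ### Auxiliary construction: threshold colorings -/

section Aux

/-- Skip the index `J`: the increasing enumeration of `Fin (r+1) \ {J}`. -/
def skipF (r : ℕ) (J : Fin (r + 1)) (i : Fin r) : Fin (r + 1) :=
  ⟨if i.1 < J.1 then i.1 else i.1 + 1, by have := i.isLt; split <;> omega⟩

lemma skipF_strictMono {r : ℕ} (J : Fin (r + 1)) : StrictMono (skipF r J) := by
  intro a b hab
  have hab' : a.1 < b.1 := hab
  simp only [skipF, Fin.mk_lt_mk]
  split <;> split <;> omega

lemma skipF_ne {r : ℕ} (J : Fin (r + 1)) (i : Fin r) : skipF r J i ≠ J := by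
  refine Fin.ne_of_val_ne ?_
  simp only [skipF]
  split <;> omega

lemma skipF_le {r : ℕ} {J K : Fin (r + 1)} (h : K ≤ J) (i : Fin r) :
    skipF r J i ≤ skipF r K i := by
  have h' : K.1 ≤ J.1 := h
  simp only [skipF, Fin.mk_le_mk]
  split <;> split <;> omega

lemma delEdge_orderEmb {n r : ℕ} (v : Fin (r + 1) → Fin n) (hv : StrictMono v)
    (J : Fin (r + 1)) (i : Fin r) :
    (delEdge v hv.injective J).1.orderEmbOfFin (delEdge v hv.injective J).2 i
      = v (skipF r J i) := by
  have h := Finset.orderEmbOfFin_unique (delEdge v hv.injective J).2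
      (f := fun i => v (skipF r J i)) ?_ (hv.comp (skipF_strictMono J))
  · exact (congrFun h i).symm
  · intro x
    refine Finset.mem_erase.mpr ⟨fun hc => skipF_ne J x (hv.injective hc), ?_⟩
    exact Finset.mem_image_of_mem _ (Finset.mem_univ _)

variable (n p : ℕ)

/-- Clamped grid coordinates of a tuple. -/
def kOf (hp : 0 < p) {m : ℕ} (x : Fin m → ℕ) : Fin m → Fin p :=
  fun i => ⟨min (p - 1) (x i - i.1 * p), by omega⟩

/-- The threshold of a tuple. -/
def thrF (hp : 0 < p) {m : ℕ} (β : (Fin m → Fin p) → Bool) (x : Fin m → ℕ) : ℤ :=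
  (n : ℤ) - 2 * ((∑ i, (kOf p hp x i).1 : ℕ) : ℤ) - (if β (kOf p hp x) then 1 else 0)

lemma thrF_antitone (hp : 0 < p) {m : ℕ} (β : (Fin m → Fin p) → Bool)
    (x y : Fin m → ℕ) (hxy : ∀ i, x i ≤ y i) :
    thrF n p hp β y ≤ thrF n p hp β x := by
  have hk : ∀ i, (kOf p hp x i).1 ≤ (kOf p hp y i).1 := fun i =>
    min_le_min (le_refl _) (Nat.sub_le_sub_right (hxy i) _)
  by_cases h : kOf p hp x = kOf p hp y
  · unfold thrF; rw [h]
  · obtain ⟨i0, hi0⟩ := Function.ne_iff.mp h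
    have hlt : (kOf p hp x i0).1 < (kOf p hp y i0).1 :=
      lt_of_le_of_ne (hk i0) (fun hc => hi0 (Fin.ext hc))
    have hsum : (∑ i, (kOf p hp x i).1) < (∑ i, (kOf p hp y i).1) :=
      Finset.sum_lt_sum (fun i _ => hk i) ⟨i0, Finset.mem_univ _, hlt⟩
    have hsum' : ((∑ i, (kOf p hp x i).1 : ℕ) : ℤ) + 1 ≤ (∑ i, (kOf p hp y i).1 : ℕ) := by
      exact_mod_cast hsum
    unfold thrF
    have h1 : (if β (kOf p hp x) then (1 : ℤ) else 0) ≤ 1 := by split <;> norm_num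
    have h2 : (0 : ℤ) ≤ (if β (kOf p hp y) then (1 : ℤ) else 0) := by split <;> norm_num
    linarith

/-- The threshold coloring associated to a bit pattern `β`. -/
def colrF (r : ℕ) (hr : 1 ≤ r) (hp : 0 < p) (β : (Fin (r - 1) → Fin p) → Bool)
    (e : REdge n r) : ℤ :=
  if thrF n p hp β (fun i : Fin (r - 1) =>
        ((e.1.orderEmbOfFin e.2) ⟨i.1, by have := i.isLt; omega⟩ : Fin n).1)
      ≤ (((e.1.orderEmbOfFin e.2) ⟨r - 1, by omega⟩ : Fin n).1 : ℤ) then 1 else -1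

lemma colrF_isMonotone {r : ℕ} (hr : 1 ≤ r) (hp : 0 < p)
    (β : (Fin (r - 1) → Fin p) → Bool) :
    IsMonotoneColoring r n (colrF n p r hr hp β) := by
  constructor
  · intro e
    unfold colrF
    split
    · right; rfl
    · left; rfl
  · intro v hv
    left
    intro j k hjk
    have hrev : k.rev ≤ j.rev := by
      simpa using hjk
    have hle : ∀ i : Fin r,
        ((delEdge v hv.injective j.rev).1.orderEmbOfFin
            (delEdge v hv.injective j.rev).2 i).1
          ≤ ((delEdge v hv.injective k.rev).1.orderEmbOfFin
            (delEdge v hv.injective k.rev).2 i).1 := by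
      intro i
      rw [delEdge_orderEmb v hv j.rev i, delEdge_orderEmb v hv k.rev i]
      exact hv.monotone (skipF_le hrev i)
    simp only [colrF]
    split_ifs with h1 h2
    · exact le_refl _
    · exfalso
      apply h2
      calc thrF n p hp β (fun i : Fin (r - 1) =>
              ((delEdge v hv.injective k.rev).1.orderEmbOfFin
                (delEdge v hv.injective k.rev).2 ⟨i.1, by have := i.isLt; omega⟩ : Fin n).1)
          ≤ thrF n p hp β (fun i : Fin (r - 1) =>
              ((delEdge v hv.injective j.rev).1.orderEmbOfFin
                (delEdge v hv.injective j.rev).2 ⟨i.1, by have := i.isLt; omega⟩ : Fin n).1) :=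
            thrF_antitone n p hp β _ _ (fun i => hle _)
        _ ≤ (((delEdge v hv.injective j.rev).1.orderEmbOfFin
                (delEdge v hv.injective j.rev).2 ⟨r - 1, by omega⟩ : Fin n).1 : ℤ) := h1
        _ ≤ (((delEdge v hv.injective k.rev).1.orderEmbOfFin
                (delEdge v hv.injective k.rev).2 ⟨r - 1, by omega⟩ : Fin n).1 : ℤ) := by
            exact_mod_cast hle _
    · norm_num
    · exact le_refl _

end Aux

section Rest

lemma arith_key {r p n S : ℕ} (hr : 3 ≤ r) (hp : 0 < p) (hnp : 3 * r * p ≤ n)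
    (hS : S ≤ (r - 1) * (p - 1)) : 2 * S + (r - 1) * p + 1 ≤ n := by
  obtain ⟨a, rfl⟩ : ∃ a, r = a + 3 := ⟨r - 3, by omega⟩
  obtain ⟨b, rfl⟩ : ∃ b, p = b + 1 := ⟨p - 1, by omega⟩
  simp only [show a + 3 - 1 = a + 2 by omega, show b + 1 - 1 = b by omega] at hS ⊢
  nlinarith [hS, hnp]

lemma arith_step {a b p ka kb : ℕ} (hab : a + 1 ≤ b) (hka : ka < p) :
    a * p + ka < b * p + kb := by
  have h1 : (a + 1) * p ≤ b * p := Nat.mul_le_mul_right p hab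
  nlinarith

lemma colrF_inj {n r p : ℕ} (hr : 3 ≤ r) (hp : 0 < p) (hnp : 3 * r * p ≤ n)
    {β β' : (Fin (r - 1) → Fin p) → Bool}
    (h : colrF n p r (by omega) hp β = colrF n p r (by omega) hp β') : β = β' := by
  by_contra hne
  obtain ⟨κ, hκ⟩ := Function.ne_iff.mp hne
  set S := ∑ i, (κ i).1 with hSdef
  have hκp : ∀ i : Fin (r - 1), (κ i).1 ≤ p - 1 := fun i => by have := (κ i).isLt; omega
  have hS : S ≤ (r - 1) * (p - 1) := by
    calc S ≤ Finset.univ.card • (p - 1) :=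
          Finset.sum_le_card_nsmul _ _ _ (fun i _ => hκp i)
      _ = (r - 1) * (p - 1) := by
          simp [Finset.card_univ, smul_eq_mul]
  have key : 2 * S + (r - 1) * p + 1 ≤ n := arith_key hr hp hnp hS
  have hn1 : 1 ≤ n := le_trans (Nat.le_add_left 1 _) key
  -- the witness edge
  set z : ℕ := n - 1 - 2 * S with hzdef
  have hz : z = n - (1 + 2 * S) := by omega
  set W : Fin r → ℕ := fun i =>
    if h : i.1 < r - 1 then i.1 * p + (κ ⟨i.1, h⟩).1 else z with hWdef
  have hWlt : ∀ a : ℕ, ∀ ka : ℕ, a + 1 ≤ r - 1 → ka < p → a * p + ka < z := by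
    intro a ka ha hka
    have h1 : a * p + ka < (r - 1) * p + 0 := arith_step ha hka
    have h2 : (r - 1) * p + 1 + 2 * S ≤ n := by linarith
    omega
  have hWn : ∀ i : Fin r, W i < n := by
    intro i
    simp only [hWdef]
    split
    · next hi =>
      have h1 : i.1 * p + (κ ⟨i.1, hi⟩).1 < z := by
        rcases Nat.lt_or_ge (i.1 + 1) (r - 1) with hc | hc
        · exact hWlt _ _ (le_of_lt hc) (κ ⟨i.1, hi⟩).isLt
        · exact hWlt _ _ (by omega) (κ ⟨i.1, hi⟩).isLt
      omega
    · omega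
  set w : Fin r → Fin n := fun i => ⟨W i, hWn i⟩ with hwdef
  have hwmono : StrictMono w := by
    intro a b hab
    have hab' : a.1 < b.1 := hab
    have hb := b.isLt
    show W a < W b
    simp only [hWdef]
    split <;> split
    · next ha hb' => exact arith_step (by omega) (κ ⟨a.1, ha⟩).isLt
    · next ha hb' => exact hWlt _ _ (by omega) (κ ⟨a.1, ha⟩).isLt
    · next ha hb' => omega
    · next ha hb' => omega
  set e : REdge n r := ⟨Finset.image w Finset.univ, by
    rw [Finset.card_image_of_injective _ hwmono.injective, Finset.card_univ,
      Fintype.card_fin]⟩ with hedef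
  have henum : ∀ i : Fin r, (e.1.orderEmbOfFin e.2) i = w i := by
    have huniq := Finset.orderEmbOfFin_unique e.2 (f := w)
        (fun x => Finset.mem_image_of_mem _ (Finset.mem_univ x)) hwmono
    intro i; exact (congrFun huniq i).symm
  have hval : ∀ γ : (Fin (r - 1) → Fin p) → Bool,
      colrF n p r (by omega) hp γ e = (if γ κ then 1 else -1) := by
    intro γ
    unfold colrF
    have hpre : (fun i : Fin (r - 1) =>
        ((e.1.orderEmbOfFin e.2) ⟨i.1, by have := i.isLt; omega⟩ : Fin n).1)
        = fun i : Fin (r - 1) => i.1 * p + (κ i).1 := by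
      funext i
      rw [henum]
      show W ⟨i.1, _⟩ = i.1 * p + (κ i).1
      simp only [hWdef]
      rw [dif_pos i.isLt]
    have hlast : (((e.1.orderEmbOfFin e.2) ⟨r - 1, by omega⟩ : Fin n).1) = z := by
      rw [henum]
      show W ⟨r - 1, _⟩ = z
      simp only [hWdef]
      rw [dif_neg (by omega)]
    rw [hpre, hlast]
    have hkof : kOf p hp (fun i : Fin (r - 1) => i.1 * p + (κ i).1) = κ := by
      funext i
      apply Fin.ext
      show min (p - 1) (i.1 * p + (κ i).1 - i.1 * p) = (κ i).1
      rw [Nat.add_sub_cancel_left]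
      exact min_eq_right (hκp i)
    unfold thrF
    rw [hkof]
    have hsum : (∑ i, (κ i).1) = S := rfl
    rw [hsum]
    have hzcast : ((z : ℕ) : ℤ) = (n : ℤ) - 1 - 2 * (S : ℤ) := by
      rw [hz]
      have : 1 + 2 * S ≤ n := by omega
      push_cast [Nat.cast_sub this]
      ring
    rw [hzcast]
    by_cases hγ : γ κ
    · rw [if_pos hγ, if_pos hγ, if_pos (by linarith)]
    · rw [if_neg hγ, if_neg hγ, if_neg (by push_cast; omega)]
  have h1 := hval β
  have h2 := hval β'
  rw [h] at h1
  rw [h1] at h2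
  by_cases hb : β κ <;> by_cases hb' : β' κ <;>
    simp [hb, hb'] at h2 hκ <;> omega

instance finite_mono (n r : ℕ) :
    Finite {c : REdge n r → ℤ // IsMonotoneColoring r n c} := by
  apply Finite.of_injective
    (fun c : {c : REdge n r → ℤ // IsMonotoneColoring r n c} =>
      (fun e => decide (c.1 e = 1) : REdge n r → Bool))
  intro c c' hcc
  apply Subtype.ext
  funext e
  have h1 := c.2.1 e
  have h2 := c'.2.1 e
  have h3 := congrFun hcc e
  rcases h1 with h1 | h1 <;> rcases h2 with h2 | h2
  · rw [h1, h2]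
  · exfalso; simp only [h1, h2] at h3; simp at h3
  · exfalso; simp only [h1, h2] at h3; simp at h3
  · rw [h1, h2]

end Rest


lemma arith_6rp {r n : ℕ} (hr : 3 ≤ r) (hbig : 3 * r ≤ n) :
    3 * r * (n / (3 * r)) ≤ n ∧ 0 < n / (3 * r) ∧ n ≤ 6 * r * (n / (3 * r)) := by
  have h3r : 0 < 3 * r := by omega
  have hp : 0 < n / (3 * r) := Nat.div_pos hbig h3r
  have hdm := Nat.div_add_mod n (3 * r)
  have hmod := Nat.mod_lt n h3r
  have h1 : 3 * r * (n / (3 * r)) ≤ n := by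
    linarith [Nat.zero_le (n % (3 * r))]
  have h3 : 3 * r ≤ 3 * r * (n / (3 * r)) := by
    calc 3 * r = 3 * r * 1 := by ring
      _ ≤ 3 * r * (n / (3 * r)) := Nat.mul_le_mul_left _ hp
  have hh : 3 * r * (n / (3 * r)) + 3 * r * (n / (3 * r)) = 6 * r * (n / (3 * r)) := by
    ring
  exact ⟨h1, hp, by linarith⟩

lemma arith_pow_main {r p n : ℕ} (hr : 3 ≤ r) (h6 : n ≤ 6 * r * p) :
    n ^ (r - 1) ≤ p ^ (r - 1) * r ^ (4 * r) := by
  have h27 : 27 ≤ r ^ 3 := by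
    calc (27 : ℕ) = 3 ^ 3 := by norm_num
      _ ≤ r ^ 3 := Nat.pow_le_pow_left hr 3
  have h64 : 6 * r ≤ r ^ 4 := by
    have : 27 * r ≤ r ^ 3 * r := Nat.mul_le_mul_right r h27
    have h4 : r ^ 4 = r ^ 3 * r := by ring
    omega
  calc n ^ (r - 1) ≤ (6 * r * p) ^ (r - 1) := Nat.pow_le_pow_left h6 _
    _ = (6 * r) ^ (r - 1) * p ^ (r - 1) := by rw [mul_pow]
    _ ≤ (r ^ 4) ^ (r - 1) * p ^ (r - 1) :=
        Nat.mul_le_mul_right _ (Nat.pow_le_pow_left h64 _)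
    _ = r ^ (4 * (r - 1)) * p ^ (r - 1) := by rw [← pow_mul]
    _ ≤ r ^ (4 * r) * p ^ (r - 1) :=
        Nat.mul_le_mul_right _ (Nat.pow_le_pow_right (by omega) (by omega))
    _ = p ^ (r - 1) * r ^ (4 * r) := mul_comm _ _

lemma arith_pow_small {r n : ℕ} (hr : 3 ≤ r) (hsmall : n < 3 * r) :
    n ^ (r - 1) ≤ r ^ (4 * r) := by
  have h3r : 3 * r ≤ r ^ 3 := by
    have h9 : 9 ≤ r * r := by nlinarith
    have : 3 * r ≤ (r * r) * r := by nlinarith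
    have h4 : r ^ 3 = r * r * r := by ring
    omega
  calc n ^ (r - 1) ≤ (3 * r) ^ (r - 1) := Nat.pow_le_pow_left (by omega) _
    _ ≤ (r ^ 3) ^ (r - 1) := Nat.pow_le_pow_left h3r _
    _ = r ^ (3 * (r - 1)) := by rw [← pow_mul]
    _ ≤ r ^ (4 * r) := Nat.pow_le_pow_right (by omega) (by omega)

/-- Lower bound on the number `S_r(n)` of `r`-monotone colorings of the `r`-subsets of
`{1,…,n}`: `S_r(n) ≥ 2^{n^{r-1}/r^{4r}}`. -/
theorem count_monotone_colorings_lower (r n : ℕ) (hr : 3 ≤ r) (hn : r ≤ n) :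
    (2 : ℝ) ^ ((n : ℝ) ^ (r - 1) / (r : ℝ) ^ (4 * r)) ≤
      Nat.card {c : REdge n r → ℤ // IsMonotoneColoring r n c} := by
  have hr0 : (0 : ℝ) < (r : ℝ) ^ (4 * r) := by positivity
  by_cases hbig : 3 * r ≤ n
  · -- main construction
    obtain ⟨hnp, hp, h6⟩ := arith_6rp hr hbig
    set p : ℕ := n / (3 * r)
    have hr1 : (1 : ℕ) ≤ r := by omega
    have hinj : Function.Injective
        (fun β : (Fin (r - 1) → Fin p) → Bool =>
          (⟨colrF n p r (by omega) hp β, colrF_isMonotone n p (by omega) hp β⟩ :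
            {c : REdge n r → ℤ // IsMonotoneColoring r n c})) := by
      intro β β' hββ
      exact colrF_inj hr hp hnp (congrArg Subtype.val hββ)
    have hcard : (2 : ℕ) ^ (p ^ (r - 1)) ≤
        Nat.card {c : REdge n r → ℤ // IsMonotoneColoring r n c} := by
      have h := Nat.card_le_card_of_injective _ hinj
      rwa [Nat.card_eq_fintype_card, Fintype.card_fun, Fintype.card_fun,
        Fintype.card_bool, Fintype.card_fin, Fintype.card_fin] at h
    have hx : (n : ℝ) ^ (r - 1) / (r : ℝ) ^ (4 * r) ≤ ((p ^ (r - 1) : ℕ) : ℝ) := by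
      rw [div_le_iff₀ hr0]
      have hN := arith_pow_main hr h6
      calc (n : ℝ) ^ (r - 1) = ((n ^ (r - 1) : ℕ) : ℝ) := by push_cast; ring
        _ ≤ ((p ^ (r - 1) * r ^ (4 * r) : ℕ) : ℝ) := by exact_mod_cast hN
        _ = ((p ^ (r - 1) : ℕ) : ℝ) * (r : ℝ) ^ (4 * r) := by push_cast; ring
    calc (2 : ℝ) ^ ((n : ℝ) ^ (r - 1) / (r : ℝ) ^ (4 * r))
        ≤ (2 : ℝ) ^ (((p ^ (r - 1) : ℕ) : ℝ)) :=
          Real.rpow_le_rpow_of_exponent_le one_le_two hx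
      _ = (2 : ℝ) ^ (p ^ (r - 1) : ℕ) := Real.rpow_natCast 2 _
      _ ≤ (Nat.card {c : REdge n r → ℤ // IsMonotoneColoring r n c} : ℝ) := by
          exact_mod_cast hcard
  · -- small case: two constant colorings
    push_neg at hbig
    have hx1 : (n : ℝ) ^ (r - 1) / (r : ℝ) ^ (4 * r) ≤ 1 := by
      rw [div_le_one hr0]
      have hN := arith_pow_small hr hbig
      calc (n : ℝ) ^ (r - 1) = ((n ^ (r - 1) : ℕ) : ℝ) := by push_cast; ring
        _ ≤ ((r ^ (4 * r) : ℕ) : ℝ) := by exact_mod_cast hN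
        _ = (r : ℝ) ^ (4 * r) := by push_cast; ring
    have e0 : REdge n r := ⟨(Finset.univ : Finset (Fin r)).map (Fin.castLEEmb hn), by
      rw [Finset.card_map, Finset.card_univ, Fintype.card_fin]⟩
    have hconst : ∀ b : Bool, IsMonotoneColoring r n
        (fun _ : REdge n r => if b then (1 : ℤ) else -1) := by
      intro b
      constructor
      · intro e; cases b
        · left; rfl
        · right; rfl
      · intro v hv; left; exact monotone_const
    have hinj2 : Function.Injective (fun b : Bool =>
        (⟨fun _ : REdge n r => if b then (1 : ℤ) else -1, hconst b⟩ :
          {c : REdge n r → ℤ // IsMonotoneColoring r n c})) := by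
      intro a b hab
      have h1 := congrFun (congrArg Subtype.val hab) e0
      cases a <;> cases b <;> simp_all
    have hcard2 : 2 ≤ Nat.card {c : REdge n r → ℤ // IsMonotoneColoring r n c} := by
      have h := Nat.card_le_card_of_injective _ hinj2
      rwa [Nat.card_eq_fintype_card, Fintype.card_bool] at h
    calc (2 : ℝ) ^ ((n : ℝ) ^ (r - 1) / (r : ℝ) ^ (4 * r))
        ≤ (2 : ℝ) ^ (1 : ℝ) := Real.rpow_le_rpow_of_exponent_le one_le_two hx1
      _ = 2 := Real.rpow_one 2
      _ ≤ (Nat.card {c : REdge n r → ℤ // IsMonotoneColoring r n c} : ℝ) := by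
          exact_mod_cast hcard2
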